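/- arXiv:2501.18387 — 5 statements merged into one kernel-verified Lean document; each statement's English description precedes it below -/
import Mathlib

section
/- Half-gates (HG2) AND-gate correctness: Let G be a group of exponent 2, Δ, Wa0, Wb0 ∈ G, and H : G → G an arbitrary function. Define Wi0 = H(Wa0), F = H(Wa0) ⊕ H(Wa0 ⊕ Δ) ⊕ Wb0, and the evaluation function Ev(Wa, Wb, wa) = H(Wa) if wa = 0 and H(Wa) ⊕ Wb ⊕ F if wa = 1. Then for all wa, wb ∈ {0,1}, Ev(Wa0 ⊕ wa·Δ, Wb0 ⊕ wb·Δ, wa) = Wi0 ⊕ (wa ∧ wb)·Δ. -/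
/-- Half-gates (HG2) AND-gate correctness: honest evaluation of the single
ciphertext `F` yields the output key for the AND of the input truth values. -/
theorem HG2_correct {G : Type*} [AddCommGroup G]
    (h2 : ∀ x : G, x + x = 0) (Δ Wa0 Wb0 : G) (H : G → G) :
    let Wi0 := H Wa0
    let F := H Wa0 + H (Wa0 + Δ) + Wb0
    let Ev : G → G → Bool → G := fun Wa Wb wa =>
      if wa then H Wa + Wb + F else H Wa
    ∀ wa wb : Bool,
      Ev (Wa0 + (if wa then Δ else 0)) (Wb0 + (if wb then Δ else 0)) wa =
        Wi0 + (if wa && wb then Δ else 0) := by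
  intro Wi0 F Ev wa wb
  cases wa <;> cases wb <;> simp [Ev, F, Wi0] <;> abel_nf <;>
    simp [two_nsmul, h2, two_smul]
end

section
/- Bandwidth-free half-gate (HG1/HG0) correctness: Let G be a group of exponent 2, Δ, Wa0 ∈ G, H : G → G arbitrary. Define Wi0 = H(Wa0) and Wb0 = H(Wa0) ⊕ H(Wa0 ⊕ Δ), and the evaluation function Ev(Wa, Wb, wa) = H(Wa) if wa = 0 and H(Wa) ⊕ Wb if wa = 1. Then for all wa, wb ∈ {0,1}, Ev(Wa0 ⊕ wa·Δ, Wb0 ⊕ wb·Δ, wa) = Wi0 ⊕ (wa ∧ wb)·Δ; i.e., the AND gate is evaluated correctly with zero ciphertexts. -/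
/-- Bandwidth-free half-gate (HG1/HG0) correctness: with
`Wb0 = H(Wa0) + H(Wa0 + Δ)` chosen by the garbler, the AND gate is evaluated
correctly with zero ciphertexts. -/
theorem HG01_correct {G : Type*} [AddCommGroup G]
    (h2 : ∀ x : G, x + x = 0) (Δ Wa0 : G) (H : G → G) :
    let Wi0 := H Wa0
    let Wb0 := H Wa0 + H (Wa0 + Δ)
    let Ev : G → G → Bool → G := fun Wa Wb wa =>
      if wa then H Wa + Wb else H Wa
    ∀ wa wb : Bool,
      Ev (Wa0 + (if wa then Δ else 0)) (Wb0 + (if wb then Δ else 0)) wa =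
        Wi0 + (if wa && wb then Δ else 0) := by
  intro Wi0 Wb0 Ev wa wb
  have h2' : ∀ x : G, (2 : ℕ) • x = 0 := fun x => by rw [two_nsmul]; exact h2 x
  have h2z : ∀ x : G, (2 : ℤ) • x = 0 := fun x => by rw [two_zsmul]; exact h2 x
  cases wa <;> cases wb <;>
    simp [Wi0, Wb0, Ev] <;> abel_nf <;>
    simp [h2', h2z]
end

section
/- Information-theoretic AND-gate (ITAND) correctness: Let G be a group of exponent 2, let Wi0, Wi1, Wa1 ∈ G, and define Wa0 = Wi0, Wb0 = Wi0, Wb1 = Wa1 ⊕ Wi1. Define Ev(Wa, Wb, wa, wb) = Wa if wa = 0, else Wb if wb = 0, else Wa ⊕ Wb. Then for all wa, wb ∈ {0,1}, Ev(W_a^{wa}, W_b^{wb}, wa, wb) = W_i^{wa ∧ wb}, where W_x^b denotes the key of wire x for truth value b. -/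
/-- Information-theoretic AND-gate (ITAND) correctness. -/
theorem ITAND_correct {G : Type*} [AddCommGroup G]
    (h2 : ∀ x : G, x + x = 0) (Wi0 Wi1 Wa1 : G) :
    let Wa0 := Wi0
    let Wb0 := Wi0
    let Wb1 := Wa1 + Wi1
    let Ev : G → G → Bool → Bool → G := fun Wa Wb wa wb =>
      if wa = false then Wa else if wb = false then Wb else Wa + Wb
    ∀ wa wb : Bool,
      Ev (if wa then Wa1 else Wa0) (if wb then Wb1 else Wb0) wa wb =
        (if wa && wb then Wi1 else Wi0) := by
  intro Wa0 Wb0 Wb1 Ev wa wb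
  cases wa <;> cases wb <;> simp [Ev, Wa0, Wb0, Wb1]
  have := h2 Wa1
  abel_nf
  rw [two_smul, h2 Wa1, zero_add]
end

section
/- Two-value evaluation closure under gate composition: Let G be a group of exponent 2 with a fixed offset Δ, and suppose every wire w of a circuit has exactly two possible keys K_w and K_w ⊕ Δ_w for some wire-specific offset Δ_w. If a gate's verification establishes that its two input wires share a common offset Δ_a = Δ_b = Δ and that its (deterministic) evaluation function maps the four input-key pairs to at most two output values K_i and K_i ⊕ Δ_i, then by induction over the gates in topological order, every circuit-output wire of a circuit passing verification admits at most two distinct evaluation results. -/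
/-- Two-value evaluation closure under gate composition: wires are indexed by
`ℕ` in topological order; `key w x` is the key on wire `w` under circuit input
assignment `x`, and `truth w x` its truth value.  Input wires carry exactly two
possible keys (one per truth value, differing by a wire offset).  Each gate
output wire `w` is computed by its evaluation function `ev w` from its two
input wires `inA w, inB w` (both earlier in topological order), and the gate is
"verified": for any two-valued key sets on its inputs, its evaluation lands in
a two-element set `{K, K + Δ}`.  Then every wire admits at most two distinct
evaluation results over all boolean inputs. -/
theorem two_value_closure {G : Type*} [AddCommGroup G]
    (h2 : ∀ x : G, x + x = 0) {ι : Type*}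
    (key : ℕ → (ι → Bool) → G) (truth : ℕ → (ι → Bool) → Bool)
    (isInput : ℕ → Prop) (inA inB : ℕ → ℕ)
    (ev : ℕ → G → G → Bool → Bool → G)
    (htopoA : ∀ w, ¬ isInput w → inA w < w)
    (htopoB : ∀ w, ¬ isInput w → inB w < w)
    (hinput : ∀ w, isInput w → ∃ K Δw : G, ∀ x : ι → Bool,
      key w x = K + (if truth w x then Δw else 0))
    (hgate : ∀ w, ¬ isInput w → ∀ x : ι → Bool,
      key w x = ev w (key (inA w) x) (key (inB w) x)
        (truth (inA w) x) (truth (inB w) x))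
    (hverified : ∀ w, ¬ isInput w → ∀ Ka Δa Kb Δb : G,
      (∀ x : ι → Bool, key (inA w) x ∈ ({Ka, Ka + Δa} : Set G)) →
      (∀ x : ι → Bool, key (inB w) x ∈ ({Kb, Kb + Δb} : Set G)) →
      ∃ Ki Δi : G, ∀ (Wa Wb : G) (wa wb : Bool),
        Wa ∈ ({Ka, Ka + Δa} : Set G) → Wb ∈ ({Kb, Kb + Δb} : Set G) →
        ev w Wa Wb wa wb ∈ ({Ki, Ki + Δi} : Set G)) :
    ∀ w, ∃ K Δw : G, ∀ x : ι → Bool,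
      key w x ∈ ({K, K + Δw} : Set G) := by
  intro w
  induction w using Nat.strong_induction_on with
  | _ w ih =>
    by_cases hw : isInput w
    · obtain ⟨K, Δw, hK⟩ := hinput w hw
      refine ⟨K, Δw, fun x => ?_⟩
      rw [hK x]
      cases truth w x <;> simp
    · obtain ⟨Ka, Δa, ha⟩ := ih (inA w) (htopoA w hw)
      obtain ⟨Kb, Δb, hb⟩ := ih (inB w) (htopoB w hw)
      obtain ⟨Ki, Δi, hi⟩ := hverified w hw Ka Δa Kb Δb ha hb
      refine ⟨Ki, Δi, fun x => ?_⟩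
      rw [hgate w hw x]
      exact hi _ _ _ _ (ha x) (hb x)
end

section
/- Correctness of backward IT garbling for boolean formulas: Let T be a binary tree (boolean formula) over gates AND, XOR, NOT with leaves as input wires, garbled recursively from the root using ITAND, ITXOR, and key-swap for NOT (each node assigns keys W^0, W^1 to its children from its own keys as specified). Then for every assignment x of boolean values to the leaves, evaluating the tree bottom-up with the per-gate evaluation rules (EvITAND, EvXOR, EvNOT) on the input keys {W_leaf^{x_leaf}} yields exactly the root key W_root^{T(x)}, where T(x) is the boolean value computed by the formula. -/
/-- A boolean formula (fan-out-1 circuit) over AND, XOR, NOT gates, where each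
binary gate node is annotated with the freely chosen key `wa1` used by the
backward information-theoretic garbling. -/
inductive GFormula (G : Type*) (ι : Type*) where
  | leaf (i : ι) : GFormula G ι
  | and (wa1 : G) (l r : GFormula G ι) : GFormula G ι
  | xor (wa1 : G) (l r : GFormula G ι) : GFormula G ι
  | not (t : GFormula G ι) : GFormula G ι

/-- Plaintext evaluation of the formula. -/
def GFormula.eval {G ι : Type*} : GFormula G ι → (ι → Bool) → Bool
  | .leaf i, x => x i
  | .and _ l r, x => l.eval x && r.eval x
  | .xor _ l r, x => Bool.xor (l.eval x) (r.eval x)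
  | .not t, x => ! t.eval x

/-- The key obtained by honest evaluation of the subtree garbled backward with
output keys `(W0, W1)`, on input assignment `x`.  Leaves yield the key for
their truth value; AND nodes use ITAND garbling (`Wa0 = Wb0 = W0`,
`Wa1 = wa1`, `Wb1 = wa1 + W1`) and EvITAND; XOR nodes use ITXOR garbling
(`Wb1 = wa1 + W0`, `Wa0 = Wb1 + W1`, `Wb0 = wa1 + W1`) and EvXOR; NOT nodes
swap the keys and copy. -/
def GFormula.evKey {G : Type*} [AddCommGroup G] {ι : Type*} :
    GFormula G ι → G → G → (ι → Bool) → G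
  | .leaf i, W0, W1, x => if x i then W1 else W0
  | .and wa1 l r, W0, W1, x =>
      let Wa := l.evKey W0 wa1 x
      let Wb := r.evKey W0 (wa1 + W1) x
      if l.eval x = false then Wa
      else if r.eval x = false then Wb
      else Wa + Wb
  | .xor wa1 l r, W0, W1, x =>
      l.evKey (wa1 + W0 + W1) wa1 x + r.evKey (wa1 + W1) (wa1 + W0) x
  | .not t, W0, W1, x => t.evKey W1 W0 x

/-- Correctness of backward IT garbling for boolean formulas: honest
evaluation yields exactly the root key associated with the formula's output
truth value. -/
theorem GFormula.evKey_correct {G : Type*} [AddCommGroup G]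
    (h2 : ∀ g : G, g + g = 0) {ι : Type*}
    (t : GFormula G ι) (W0 W1 : G) (x : ι → Bool) :
    t.evKey W0 W1 x = if t.eval x then W1 else W0 := by
  have h2' : ∀ g : G, 2 • g = 0 := fun g => by rw [two_nsmul]; exact h2 g
  have h2'' : ∀ g : G, (2 : ℤ) • g = 0 := fun g => by rw [two_zsmul]; exact h2 g
  induction t generalizing W0 W1 with
  | leaf i => simp [evKey, eval]; congr
  | and wa1 l r ihl ihr =>
      simp only [evKey, eval, ihl, ihr]
      rcases Bool.eq_false_or_eq_true (l.eval x) with hl | hl <;>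
        rcases Bool.eq_false_or_eq_true (r.eval x) with hr | hr <;>
        simp [hl, hr] <;> abel_nf <;> simp [h2, h2', h2'']
  | xor wa1 l r ihl ihr =>
      simp only [evKey, eval, ihl, ihr]
      rcases Bool.eq_false_or_eq_true (l.eval x) with hl | hl <;>
        rcases Bool.eq_false_or_eq_true (r.eval x) with hr | hr <;>
        simp [hl, hr] <;> abel_nf <;> simp [h2, h2', h2'']
  | not t ih =>
      simp only [evKey, eval, ih]
      rcases Bool.eq_false_or_eq_true (t.eval x) with ht | ht <;> simp_all
end
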